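/- Let h ≠ 0 be a real constant and let f be a C² real function on an open interval I ⊆ (0,∞) with f'(r) ≠ 0 for all r ∈ I. If −(4r³ f''(r) + f'(r)³)/(r (4r² + f'(r)²)^{3/2}) = h for all r ∈ I (i.e., the surface of revolution t = f(√(x²+y²)) in the Heisenberg group has constant horizontal mean curvature h on I), then there exists a constant C ∈ ℝ such that for all r ∈ I one has 16 r² − (2hr² + C)² > 0 and f'(r)² (16 r² − (2hr² + C)²) = 4 r² (2hr² + C)². -/

import Mathlib

/-- First integral of the constant horizontal mean curvature equation for
surfaces of revolution `t = f(√(x²+y²))` in the Heisenberg group, `h ≠ 0`. -/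
theorem constant_horizontal_mean_curvature_revolution
    (h : ℝ) (hh : h ≠ 0) (a b : ℝ) (ha : 0 ≤ a) (f : ℝ → ℝ)
    (hf : ContDiffOn ℝ 2 f (Set.Ioo a b))
    (hf' : ∀ r ∈ Set.Ioo a b, deriv f r ≠ 0)
    (hH : ∀ r ∈ Set.Ioo a b,
      -(4 * r ^ 3 * deriv (deriv f) r + (deriv f r) ^ 3) /
          (r * (4 * r ^ 2 + (deriv f r) ^ 2) ^ ((3 : ℝ) / 2)) = h) :
    ∃ C : ℝ, ∀ r ∈ Set.Ioo a b,
      16 * r ^ 2 - (2 * h * r ^ 2 + C) ^ 2 > 0 ∧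
      (deriv f r) ^ 2 * (16 * r ^ 2 - (2 * h * r ^ 2 + C) ^ 2) =
        4 * r ^ 2 * (2 * h * r ^ 2 + C) ^ 2 := by
  rcases Set.eq_empty_or_nonempty (Set.Ioo a b) with he | ⟨r₀, hr₀⟩
  · exact ⟨0, by rw [he]; simp⟩
  set g : ℝ → ℝ := fun x =>
    4 * x * deriv f x / Real.sqrt (4 * x ^ 2 + deriv f x ^ 2) + 2 * h * x ^ 2 with hg
  -- basic facts at each point
  have hrpos : ∀ r ∈ Set.Ioo a b, 0 < r := fun r hr => lt_of_le_of_lt ha hr.1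
  have hSpos : ∀ r ∈ Set.Ioo a b, 0 < 4 * r ^ 2 + deriv f r ^ 2 := by
    intro r hr
    have := hrpos r hr
    positivity
  have hspos : ∀ r ∈ Set.Ioo a b, 0 < Real.sqrt (4 * r ^ 2 + deriv f r ^ 2) :=
    fun r hr => Real.sqrt_pos.mpr (hSpos r hr)
  have hd2 : ∀ r ∈ Set.Ioo a b,
      HasDerivAt (deriv f) (deriv (deriv f) r) r := by
    intro r hr
    have h1 : ContDiffOn ℝ 1 (deriv f) (Set.Ioo a b) :=
      hf.deriv_of_isOpen isOpen_Ioo (by norm_num)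
    exact ((h1.differentiableOn one_ne_zero).differentiableAt
      (isOpen_Ioo.mem_nhds hr)).hasDerivAt
  have hODE : ∀ r ∈ Set.Ioo a b,
      4 * r ^ 3 * deriv (deriv f) r + (deriv f r) ^ 3 =
        -(h * (r * Real.sqrt (4 * r ^ 2 + deriv f r ^ 2) ^ 3)) := by
    intro r hr
    have hS := hSpos r hr
    have h32 : (4 * r ^ 2 + deriv f r ^ 2) ^ ((3 : ℝ) / 2) =
        Real.sqrt (4 * r ^ 2 + deriv f r ^ 2) ^ 3 := by
      rw [Real.sqrt_eq_rpow, ← Real.rpow_natCast _ 3, ← Real.rpow_mul hS.le]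
      norm_num
    have := hH r hr
    rw [h32] at this
    have hr0 : r ≠ 0 := (hrpos r hr).ne'
    have hs0 : Real.sqrt (4 * r ^ 2 + deriv f r ^ 2) ≠ 0 := (hspos r hr).ne'
    field_simp at this
    linarith
  have hgderiv : ∀ r ∈ Set.Ioo a b, HasDerivAt g 0 r := by
    intro r hr
    set s := Real.sqrt (4 * r ^ 2 + deriv f r ^ 2) with hsdef
    have hS := hSpos r hr
    have hs := hspos r hr
    have hd := hd2 r hr
    have hu : HasDerivAt (fun x => 4 * x * deriv f x)
        (4 * deriv f r + 4 * r * deriv (deriv f) r) r := by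
      have := ((hasDerivAt_id' r).const_mul (4:ℝ)).mul hd
      exact this.congr_deriv (by ring)
    have hSder : HasDerivAt (fun x => 4 * x ^ 2 + deriv f x ^ 2)
        (8 * r + 2 * deriv f r * deriv (deriv f) r) r := by
      have h1 : HasDerivAt (fun x : ℝ => 4 * x ^ 2) (8 * r) r := by
        have := (hasDerivAt_pow 2 r).const_mul (4:ℝ)
        simpa using this.congr_deriv (by ring)
      have h2 : HasDerivAt (fun x => deriv f x ^ 2)
          (2 * deriv f r * deriv (deriv f) r) r := by
        have := hd.pow 2
        exact this.congr_deriv (by ring)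
      exact h1.add h2
    have hv : HasDerivAt (fun x => Real.sqrt (4 * x ^ 2 + deriv f x ^ 2))
        ((8 * r + 2 * deriv f r * deriv (deriv f) r) / (2 * s)) r :=
      hSder.sqrt hS.ne'
    have hdiv := (hu.div hv hs.ne')
    have hquad : HasDerivAt (fun x : ℝ => 2 * h * x ^ 2) (4 * h * r) r := by
      have := (hasDerivAt_pow 2 r).const_mul (2*h)
      simpa using this.congr_deriv (by ring)
    have htot := hdiv.add hquad
    have hODEr := hODE r hr
    have hs2 : s ^ 2 = 4 * r ^ 2 + deriv f r ^ 2 := Real.sq_sqrt hS.le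
    have key : ((4 * deriv f r + 4 * r * deriv (deriv f) r) * s -
        4 * r * deriv f r * ((8 * r + 2 * deriv f r * deriv (deriv f) r) / (2 * s))) / s ^ 2
        + 4 * h * r = 0 := by
      have hnum : (4 * deriv f r + 4 * r * deriv (deriv f) r) * s ^ 2 -
          4 * r * deriv f r * (8 * r + 2 * deriv f r * deriv (deriv f) r) / 2 +
          4 * h * r * s ^ 3 = 0 := by
        linear_combination (4 * deriv f r + 4 * r * deriv (deriv f) r) * hs2 + 4 * hODEr
      have hrw : ((4 * deriv f r + 4 * r * deriv (deriv f) r) * s -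
          4 * r * deriv f r * ((8 * r + 2 * deriv f r * deriv (deriv f) r) / (2 * s))) / s ^ 2
          + 4 * h * r =
          ((4 * deriv f r + 4 * r * deriv (deriv f) r) * s ^ 2 -
          4 * r * deriv f r * (8 * r + 2 * deriv f r * deriv (deriv f) r) / 2 +
          4 * h * r * s ^ 3) / s ^ 3 := by
        have hs0 : s ≠ 0 := hs.ne'
        field_simp
      rw [hrw, hnum, zero_div]
    exact htot.congr_deriv key
  -- constancy of g on the interval
  have hconst : ∀ r ∈ Set.Ioo a b, g r = g r₀ := by
    intro r hr
    refine (convex_Ioo a b).is_const_of_fderivWithin_eq_zero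
      (fun x hx => ((hgderiv x hx).differentiableAt).differentiableWithinAt) ?_ hr hr₀
    intro x hx
    have := (hgderiv x hx).hasFDerivAt.fderiv
    rw [fderivWithin_of_isOpen isOpen_Ioo hx, this]
    ext y; simp
  refine ⟨-(g r₀), fun r hr => ?_⟩
  have hS := hSpos r hr
  have hs := hspos r hr
  have hs2 : Real.sqrt (4 * r ^ 2 + deriv f r ^ 2) ^ 2 = 4 * r ^ 2 + deriv f r ^ 2 :=
    Real.sq_sqrt hS.le
  have hkey : 2 * h * r ^ 2 + -(g r₀) =
      -(4 * r * deriv f r / Real.sqrt (4 * r ^ 2 + deriv f r ^ 2)) := by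
    have := hconst r hr
    simp only [hg] at this
    linarith
  set s := Real.sqrt (4 * r ^ 2 + deriv f r ^ 2) with hsdef
  have hrpos' := hrpos r hr
  have hf'r := hf' r hr
  constructor
  · rw [hkey]
    have : (-(4 * r * deriv f r / s)) ^ 2 = 16 * r ^ 2 * deriv f r ^ 2 / (s^2) := by
      field_simp; ring
    rw [this, hs2]
    rw [gt_iff_lt, sub_pos, div_lt_iff₀ (by linarith [hS] : (0:ℝ) < 4 * r ^ 2 + deriv f r ^ 2)]
    nlinarith [pow_pos hrpos' 4, sq_nonneg (deriv f r)]
  · rw [hkey]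
    have h1 : (-(4 * r * deriv f r / s)) ^ 2 = 16 * r ^ 2 * deriv f r ^ 2 / (s^2) := by
      field_simp; ring
    rw [h1, hs2]
    field_simp
    ring
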